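/- Lebesgue decomposition lemma for invariant measures: Assume E is finite, ℙ is translation invariant and ergodic in the time direction, the random walk is elliptic, ℚ is a probability measure on (Ω,ℱ) invariant for the environment process, and the restrictions of ℚ and ℙ to (Ω, ℱ_{≥0}) are not mutually singular. Then there exists a probability measure ℚ_c on (Ω,ℱ), invariant for the environment process, such that ℚ_c and ℙ are mutually absolutely continuous on (Ω, ℱ_{≥0}). -/

import Mathlib

open MeasureTheory ProbabilityTheory Filter Topology

namespace RWDRE

/-- Space-time sites: `ℤ^d × ℤ` (space, time). -/
abbrev Site (d : ℕ) : Type := (Fin d → ℤ) × ℤ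

/-- Environments: `Ω = E^{ℤ^{d+1}}`. We write `η (x, t)` for `η_t(x)`. -/
abbrev Env (d : ℕ) (E : Type*) : Type _ := Site d → E

variable {d : ℕ} {E : Type*}

/-- The shift `θ_{x,t}`: `(θ_{x,t} η)_s(y) = η_{s+t}(y+x)`. -/
def shift (x : Fin d → ℤ) (t : ℤ) (η : Env d E) : Env d E :=
  fun p => η (p.1 + x, p.2 + t)

section Meas

variable [MeasurableSpace E]

/-- The sub-σ-algebra `ℱ_Λ` generated by the cylinders of `Λ ⊆ ℤ^{d+1}`. -/
def cylSA (Λ : Set (Site d)) : MeasurableSpace (Env d E) :=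
  MeasurableSpace.comap (fun (η : Env d E) (p : Λ) => η ↑p) MeasurableSpace.pi

/-- Elementary conditional probability `ℙ(B|A) = ℙ(B ∩ A)/ℙ(A)` as a real number. -/
noncomputable def condProb {Ω : Type*} [MeasurableSpace Ω] (μ : Measure Ω) (B A : Set Ω) : ℝ :=
  (μ (B ∩ A)).toReal / (μ A).toReal

/-- Translation invariance of the environment law. -/
def IsTranslationInvariant (P : Measure (Env d E)) : Prop :=
  ∀ (x : Fin d → ℤ) (t : ℤ), P.map (shift x t) = P

/-- Ergodicity in the time direction. -/
def IsTimeErgodic (P : Measure (Env d E)) : Prop :=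
  ∀ B : Set (Env d E), MeasurableSet B → shift (0 : Fin d → ℤ) 1 ⁻¹' B = B →
    P B = 0 ∨ P B = 1

/-- The standing assumptions on the jump kernel `α` of the random walk:
nonnegative, normalized, jump range contained in the finite set `𝓡 ∋ o` with
`‖y‖₁ ≤ R` on `𝓡`, and of finite range `R` in its dependence on the environment. -/
structure IsTransition (𝓡 : Finset (Fin d → ℤ)) (R : ℕ)
    (α : Env d E → (Fin d → ℤ) → ℝ) : Prop where
  nonneg : ∀ η y, 0 ≤ α η y
  sum_one : ∀ η, ∑ y ∈ 𝓡, α η y = 1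
  supp : ∀ η y, y ∉ 𝓡 → α η y = 0
  zero_mem : (0 : Fin d → ℤ) ∈ 𝓡
  range_le : ∀ y ∈ 𝓡, (∑ i, |y i|) ≤ (R : ℤ)
  finRange : ∀ η σ z, (∀ y : Fin d → ℤ, (∀ i, |y i| ≤ (R : ℤ)) → η (y, 0) = σ (y, 0)) →
    α η z = α σ z

/-- Backwards trajectories `Γ_k`: `γ` is indexed by `j ∈ {0,…,k}`, where index `j`
corresponds to time `j - k ∈ {-k,…,0}`; `γ` ends at the origin and has increments in `𝓡`. -/
def IsPath (𝓡 : Finset (Fin d → ℤ)) (k : ℕ) (γ : Fin (k + 1) → (Fin d → ℤ)) : Prop :=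
  γ (Fin.last k) = 0 ∧ ∀ i : Fin k, γ i.succ - γ i.castSucc ∈ 𝓡

/-- Extension of a path to all of `ℕ` (constant after `k`). -/
def pad {k : ℕ} (γ : Fin (k + 1) → (Fin d → ℤ)) : ℕ → (Fin d → ℤ) :=
  fun j => γ ⟨min j k, Nat.lt_succ_of_le (Nat.min_le_right j k)⟩

/-- The event `A_{-k}^{-m}(γ,σ)`: the environment agrees with `σ` on the
`R`-neighbourhood of the path at the times `-k,…,-m` (index `j ↔` time `j - k`). -/
def pathEvent (R : ℕ) (k m : ℕ) (γ : Fin (k + 1) → (Fin d → ℤ)) (σ : Env d E) :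
    Set (Env d E) :=
  {η | ∀ j : ℕ, j ≤ k - m → ∀ y : Fin d → ℤ, (∀ i, |y i| ≤ (R : ℤ)) →
    η (y + pad γ j, (j : ℤ) - (k : ℤ)) = σ (y + pad γ j, (j : ℤ) - (k : ℤ))}

/-- `𝒜_{-k}^{-m}(γ)`: all possible (positive-probability) observations along `γ`. -/
def obsEvents (R : ℕ) (k m : ℕ) (γ : Fin (k + 1) → (Fin d → ℤ))
    (P : Measure (Env d E)) : Set (Set (Env d E)) :=
  {A | ∃ σ : Env d E, A = pathEvent R k m γ σ ∧ 0 < P A}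

/-- `𝒜_{-∞}^{-m}`. -/
def obsFrom (𝓡 : Finset (Fin d → ℤ)) (R : ℕ) (P : Measure (Env d E)) (m : ℕ) :
    Set (Set (Env d E)) :=
  {A | ∃ k, m ≤ k ∧ ∃ γ : Fin (k + 1) → (Fin d → ℤ), IsPath 𝓡 k γ ∧ A ∈ obsEvents R k m γ P}

/-- `𝒜_{-∞} = 𝒜_{-∞}^{-1}`. -/
abbrev obsAll (𝓡 : Finset (Fin d → ℤ)) (R : ℕ) (P : Measure (Env d E)) :
    Set (Set (Env d E)) := obsFrom 𝓡 R P 1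

/-- The cone `𝒞(j) = {(x,t) : t ≥ j, ‖x‖₁ ≤ (R+1)t}`. -/
def coneSet (d : ℕ) (R : ℕ) (j : ℕ) : Set (Site d) :=
  {p | (j : ℤ) ≤ p.2 ∧ (∑ i, |p.1 i|) ≤ ((R : ℤ) + 1) * p.2}

/-- The forward half-space `ℍ = ℤ^d × ℤ_{≥0}`. -/
def halfSpace (d : ℕ) : Set (Site d) := {p | 0 ≤ p.2}

/-- `Λ(l) = {z ∈ ℍ : ‖z‖₁ ≥ l}`. -/
def lamSet (d : ℕ) (l : ℕ) : Set (Site d) :=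
  {p | 0 ≤ p.2 ∧ (l : ℤ) ≤ (∑ i, |p.1 i|) + p.2}

/-- One step of the environment process applied to a measure: `ℚ ↦ ℚK`, where
`K(η,·) = Σ_{y∈𝓡} α(η,y) δ_{θ_{y,1}η}`. -/
noncomputable def stepEP (𝓡 : Finset (Fin d → ℤ)) (α : Env d E → (Fin d → ℤ) → ℝ)
    (Q : Measure (Env d E)) : Measure (Env d E) :=
  ∑ y ∈ 𝓡, (Q.withDensity fun η => ENNReal.ofReal (α η y)).map (shift y 1)

/-- `ℚ` is invariant for the environment process. -/
def IsInvariantEP (𝓡 : Finset (Fin d → ℤ)) (α : Env d E → (Fin d → ℤ) → ℝ)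
    (Q : Measure (Env d E)) : Prop :=
  stepEP 𝓡 α Q = Q

/-- `ℚ` is ergodic for the environment process: every harmonic indicator is a.s. constant. -/
def IsErgodicEP (𝓡 : Finset (Fin d → ℤ)) (α : Env d E → (Fin d → ℤ) → ℝ)
    (Q : Measure (Env d E)) : Prop :=
  ∀ B : Set (Env d E), MeasurableSet B →
    (∀ᵐ η ∂Q, ∑ y ∈ 𝓡, α η y * Set.indicator B (fun _ => (1 : ℝ)) (shift y 1 η)
        = Set.indicator B (fun _ => (1 : ℝ)) η) →
    Q B = 0 ∨ Q B = 1

/-- `P` is the annealed (joint) law of the environment (with law `ℙ`) and the walk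
`(X_t)_{t≥0}` with `X_0 = o` and quenched transitions
`P_η(X_{t+1} = y + z | X_t = y) = α(θ_{y,t}η, z)`, characterized through its
finite-dimensional distributions. -/
def IsAnnealedLaw (α : Env d E → (Fin d → ℤ) → ℝ) (P : Measure (Env d E))
    (PP : Measure (Env d E × (ℕ → (Fin d → ℤ)))) : Prop :=
  ∀ (k : ℕ) (x : ℕ → (Fin d → ℤ)) (B : Set (Env d E)), MeasurableSet B →
    PP {p | p.1 ∈ B ∧ ∀ i ≤ k, p.2 i = x i} =
      if x 0 = 0 then
        ∫⁻ η in B, ∏ i ∈ Finset.range k,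
          ENNReal.ofReal (α (shift (x i) (i : ℤ) η) (x (i + 1) - x i)) ∂P
      else 0

end Meas

end RWDRE

namespace RWDRE

open MeasureTheory ProbabilityTheory Filter Topology
section Aux

variable {d : ℕ} {E : Type*} [MeasurableSpace E]

lemma measurable_eval_cylSA {Λ : Set (Site d)} {p : Site d} (hp : p ∈ Λ) :
    Measurable[cylSA (E := E) Λ] fun η : Env d E => η p := fun s hs =>
  ⟨(fun f : Λ → E => f ⟨p, hp⟩) ⁻¹' s, measurable_pi_apply (⟨p, hp⟩ : Λ) hs, rfl⟩

lemma cylSA_le_pi (Λ : Set (Site d)) :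
    cylSA (E := E) Λ ≤ MeasurableSpace.pi :=
  measurable_iff_comap_le.mp (measurable_pi_lambda _ fun p => measurable_pi_apply _)

lemma cylSA_mono {Λ Λ' : Set (Site d)} (h : Λ ⊆ Λ') :
    cylSA (E := E) Λ ≤ cylSA (E := E) Λ' := by
  intro s hs
  obtain ⟨t, ht, rfl⟩ := hs
  exact ⟨(fun f : Λ' → E => fun p : Λ => f ⟨p.1, h p.2⟩) ⁻¹' t,
    (measurable_pi_lambda _ fun p => measurable_pi_apply _) ht, rfl⟩

lemma measurable_shift_cylSA {Λ Λ' : Set (Site d)} (y : Fin d → ℤ) (t : ℤ)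
    (h : ∀ p ∈ Λ, ((p.1 + y, p.2 + t) : Site d) ∈ Λ') :
    @Measurable _ _ (cylSA (E := E) Λ') (cylSA (E := E) Λ) (shift y t) := by
  intro s hs
  obtain ⟨u, hu, rfl⟩ := hs
  have hφ : Measurable[cylSA (E := E) Λ']
      (fun η : Env d E => fun p : Λ => η ((p : Site d).1 + y, (p : Site d).2 + t)) := by
    letI : MeasurableSpace (Env d E) := cylSA (E := E) Λ'
    exact measurable_pi_lambda _ fun p => measurable_eval_cylSA (h p p.2)
  exact hφ hu

lemma measurable_shift (y : Fin d → ℤ) (t : ℤ) :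
    Measurable (shift (E := E) y t) :=
  measurable_pi_lambda _ fun p => measurable_pi_apply _

/-- The finite box `[-R,R]^d × {0}` of sites a transition kernel may depend on. -/
def box0 (d R : ℕ) : Set (Site d) := {p | (∀ i, |p.1 i| ≤ (R : ℤ)) ∧ p.2 = 0}

lemma finite_box0 (d R : ℕ) : (box0 d R).Finite := by
  have h1 : {x : Fin d → ℤ | ∀ i, x i ∈ Set.Icc (-(R : ℤ)) R}.Finite := by
    have := Set.Finite.pi (fun i : Fin d => Set.finite_Icc (-(R : ℤ)) R)
    refine this.subset fun x hx => ?_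
    exact fun i _ => hx i
  refine ((h1.image (fun x => ((x, 0) : Site d)))).subset fun p hp => ?_
  refine ⟨p.1, fun i => abs_le.mp (hp.1 i), ?_⟩
  have := hp.2
  exact Prod.ext rfl this.symm

end Aux

section Aux2

variable {d : ℕ} {E : Type*} [MeasurableSpace E]

lemma measurable_alpha [Finite E] [Nonempty E] [MeasurableSingletonClass E] {𝓡 : Finset (Fin d → ℤ)} {R : ℕ}
    {α : Env d E → (Fin d → ℤ) → ℝ} (hα : IsTransition 𝓡 R α) (y : Fin d → ℤ)
    {Λ : Set (Site d)} (hΛ : box0 d R ⊆ Λ) :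
    Measurable[cylSA (E := E) Λ] fun η : Env d E => α η y := by
  classical
  inhabit E
  set B : Set (Site d) := box0 d R with hB
  haveI : Finite B := (finite_box0 d R).to_subtype
  haveI : MeasurableSingletonClass (B → E) := by infer_instance
  set ext : (B → E) → Env d E := fun σ p => if h : p ∈ B then σ ⟨p, h⟩ else default with hext
  have hfac : (fun η : Env d E => α η y)
      = (fun σ : B → E => α (ext σ) y) ∘ (fun η : Env d E => fun p : B => η (p : Site d)) := by
    funext η
    refine hα.finRange η (ext fun p : B => η (p : Site d)) y fun z hz => ?_
    have hmem : ((z, 0) : Site d) ∈ B := ⟨hz, rfl⟩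
    simp only [ext, dif_pos hmem]
  rw [hfac]
  have hrestr : Measurable[cylSA (E := E) Λ]
      (fun η : Env d E => fun p : B => η (p : Site d)) := by
    letI : MeasurableSpace (Env d E) := cylSA (E := E) Λ
    exact measurable_pi_lambda _ fun p => measurable_eval_cylSA (hΛ p.2)
  exact (measurable_of_finite _).comp hrestr

variable [MeasurableSingletonClass E] {𝓡 : Finset (Fin d → ℤ)} {R : ℕ} {α : Env d E → (Fin d → ℤ) → ℝ}

lemma measurable_alpha' [Finite E] [Nonempty E] (hα : IsTransition 𝓡 R α) (y : Fin d → ℤ) :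
    Measurable fun η : Env d E => α η y :=
  (measurable_alpha hα y (subset_refl _)).mono (cylSA_le_pi _) le_rfl

lemma stepEP_apply [Finite E] [Nonempty E] (hα : IsTransition 𝓡 R α)
    (μ : Measure (Env d E)) {s : Set (Env d E)} (hs : MeasurableSet s) :
    stepEP 𝓡 α μ s = ∑ y ∈ 𝓡, ∫⁻ η in shift y 1 ⁻¹' s, ENNReal.ofReal (α η y) ∂μ := by
  rw [stepEP, Measure.finset_sum_apply]
  refine Finset.sum_congr rfl fun y _ => ?_
  rw [Measure.map_apply (measurable_shift y 1) hs,
    withDensity_apply _ ((measurable_shift y 1) hs)]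

lemma stepEP_univ [Finite E] [Nonempty E] (hα : IsTransition 𝓡 R α)
    (μ : Measure (Env d E)) : stepEP 𝓡 α μ Set.univ = μ Set.univ := by
  rw [stepEP_apply hα μ MeasurableSet.univ]
  simp only [Set.preimage_univ, Measure.restrict_univ]
  rw [← lintegral_finset_sum _ fun y _ =>
    (measurable_alpha' hα y).ennreal_ofReal]
  have : ∀ η : Env d E, ∑ y ∈ 𝓡, ENNReal.ofReal (α η y) = 1 := fun η => by
    rw [← ENNReal.ofReal_sum_of_nonneg fun y _ => hα.nonneg η y, hα.sum_one η,
      ENNReal.ofReal_one]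
  simp only [this, lintegral_one]

lemma stepEP_add (μ ν : Measure (Env d E)) :
    stepEP 𝓡 α (μ + ν) = stepEP 𝓡 α μ + stepEP 𝓡 α ν := by
  simp only [stepEP, withDensity_add_measure,
    Measure.map_add _ _ (measurable_shift _ 1), Finset.sum_add_distrib]

lemma stepEP_smul (c : ENNReal) (μ : Measure (Env d E)) :
    stepEP 𝓡 α (c • μ) = c • stepEP 𝓡 α μ := by
  simp only [stepEP, withDensity_smul_measure, Measure.map_smul, Finset.smul_sum]

lemma stepEP_mono [Finite E] [Nonempty E] (hα : IsTransition 𝓡 R α)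
    {μ ν : Measure (Env d E)} (h : μ ≤ ν) : stepEP 𝓡 α μ ≤ stepEP 𝓡 α ν := by
  refine Measure.le_iff.mpr fun s hs => ?_
  rw [stepEP_apply hα μ hs, stepEP_apply hα ν hs]
  refine Finset.sum_le_sum fun y _ => ?_
  exact lintegral_mono' (Measure.restrict_mono (Set.Subset.refl _) h) le_rfl

end Aux2

set_option linter.unusedSectionVars false

section Aux3

variable {d : ℕ} {E : Type*} [MeasurableSpace E] [MeasurableSingletonClass E]
  [Finite E] [Nonempty E]
  {𝓡 : Finset (Fin d → ℤ)} {R : ℕ} {α : Env d E → (Fin d → ℤ) → ℝ}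

/-- The sets `{p : t ≥ -j}` indexing our filtration. -/
def tSet (d : ℕ) (j : ℕ) : Set (Site d) := {p | -(j : ℤ) ≤ p.2}

lemma halfSpace_eq_tSet : halfSpace d = tSet d 0 := by
  ext p; simp [halfSpace, tSet]

lemma tSet_mono {j k : ℕ} (h : j ≤ k) : tSet d j ⊆ tSet d k := fun p hp =>
  le_trans (by exact_mod_cast neg_le_neg (Int.ofNat_le.mpr h)) hp

lemma box0_subset_tSet (R j : ℕ) : box0 d R ⊆ tSet d j := fun p hp => by
  simp only [tSet, Set.mem_setOf_eq, hp.2]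
  omega

lemma shift_mem_tSet {j : ℕ} (y : Fin d → ℤ) :
    ∀ p ∈ tSet d (j + 1), ((p.1 + y, p.2 + 1) : Site d) ∈ tSet d j := fun p hp => by
  simp only [tSet, Set.mem_setOf_eq] at hp ⊢
  omega

lemma shift_mem_halfSpace (y : Fin d → ℤ) :
    ∀ p ∈ halfSpace d, ((p.1 + y, p.2 + 1) : Site d) ∈ halfSpace d := fun p hp => by
  simp only [halfSpace, Set.mem_setOf_eq] at hp ⊢
  omega

/-- If a measure kills all `ℱ_{≥0}`-measurable `P`-null sets, so does its image
under one step of the environment process. -/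
lemma stepEP_null (hα : IsTransition 𝓡 R α)
    (P : Measure (Env d E)) (htrans : IsTranslationInvariant P)
    {μ : Measure (Env d E)}
    (hμ : ∀ A : Set (Env d E), MeasurableSet[cylSA (halfSpace d)] A → P A = 0 → μ A = 0)
    (A : Set (Env d E)) (hA : MeasurableSet[cylSA (halfSpace d)] A) (hPA : P A = 0) :
    stepEP 𝓡 α μ A = 0 := by
  have hAamb : MeasurableSet A := cylSA_le_pi (E := E) (halfSpace d) _ hA
  rw [stepEP_apply hα μ hAamb]
  refine Finset.sum_eq_zero fun y _ => ?_
  have hpre : MeasurableSet[cylSA (E := E) (halfSpace d)] (shift y 1 ⁻¹' A) :=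
    measurable_shift_cylSA y 1 (shift_mem_halfSpace y) hA
  have hPpre : P (shift y 1 ⁻¹' A) = 0 := by
    have := htrans y 1
    calc P (shift y 1 ⁻¹' A) = P.map (shift y 1) A := by
          rw [Measure.map_apply (measurable_shift y 1) hAamb]
      _ = P A := by rw [this]
      _ = 0 := hPA
  have hμpre : μ (shift y 1 ⁻¹' A) = 0 := hμ _ hpre hPpre
  exact setLIntegral_measure_zero _ _ hμpre

/-- Agreement of two measures on `ℱ_{≥-j}` propagates to agreement of their
environment-process images on `ℱ_{≥-(j+1)}`. -/
lemma stepEP_eq_on (hα : IsTransition 𝓡 R α) {μ ν : Measure (Env d E)} {j : ℕ}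
    (h : ∀ A : Set (Env d E), MeasurableSet[cylSA (tSet d j)] A → μ A = ν A) :
    ∀ A : Set (Env d E), MeasurableSet[cylSA (tSet d (j + 1))] A →
      stepEP 𝓡 α μ A = stepEP 𝓡 α ν A := by
  intro A hA
  have hle : cylSA (E := E) (tSet d j) ≤ MeasurableSpace.pi := cylSA_le_pi _
  have hAamb : MeasurableSet A := cylSA_le_pi (E := E) (tSet d (j + 1)) _ hA
  have htrim : μ.trim hle = ν.trim hle :=
    @Measure.ext (Env d E) (cylSA (E := E) (tSet d j)) _ _ fun s hs => by
      rw [trim_measurableSet_eq hle hs, trim_measurableSet_eq hle hs, h s hs]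
  rw [stepEP_apply hα μ hAamb, stepEP_apply hα ν hAamb]
  refine Finset.sum_congr rfl fun y _ => ?_
  have hpre : MeasurableSet[cylSA (E := E) (tSet d j)] (shift y 1 ⁻¹' A) :=
    measurable_shift_cylSA y 1 (shift_mem_tSet y) hA
  have hpreamb : MeasurableSet (shift y 1 ⁻¹' A) := hle _ hpre
  have hf : Measurable[cylSA (E := E) (tSet d j)]
      ((shift y 1 ⁻¹' A).indicator fun η => ENNReal.ofReal (α η y)) :=
    Measurable.indicator
      ((measurable_alpha hα y (box0_subset_tSet R j)).ennreal_ofReal) hpre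
  calc ∫⁻ η in shift y 1 ⁻¹' A, ENNReal.ofReal (α η y) ∂μ
      = ∫⁻ η, (shift y 1 ⁻¹' A).indicator (fun η => ENNReal.ofReal (α η y)) η ∂μ := by
        rw [lintegral_indicator hpreamb _]
    _ = ∫⁻ η, (shift y 1 ⁻¹' A).indicator (fun η => ENNReal.ofReal (α η y)) η ∂(μ.trim hle) :=
        (lintegral_trim hle hf).symm
    _ = ∫⁻ η, (shift y 1 ⁻¹' A).indicator (fun η => ENNReal.ofReal (α η y)) η ∂(ν.trim hle) := by
        rw [htrim]
    _ = ∫⁻ η, (shift y 1 ⁻¹' A).indicator (fun η => ENNReal.ofReal (α η y)) η ∂ν :=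
        lintegral_trim hle hf
    _ = ∫⁻ η in shift y 1 ⁻¹' A, ENNReal.ofReal (α η y) ∂ν := by
        rw [lintegral_indicator hpreamb _]

end Aux3

section Aux4

variable {d : ℕ} {E : Type*} [MeasurableSpace E]

/-- The cylinder σ-algebras of the sets `tSet d j` generate the full product σ-algebra. -/
lemma generateFrom_tSets :
    (MeasurableSpace.pi : MeasurableSpace (Env d E)) =
      MeasurableSpace.generateFrom
        {A : Set (Env d E) | ∃ j, MeasurableSet[cylSA (tSet d j)] A} := by
  refine le_antisymm ?_ ?_
  · rw [MeasurableSpace.pi]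
    refine iSup_le fun p => ?_
    intro A hA
    obtain ⟨u, hu, rfl⟩ := hA
    refine MeasurableSpace.measurableSet_generateFrom ⟨p.2.natAbs, ?_⟩
    have hp : p ∈ tSet d p.2.natAbs := by
      simp only [tSet, Set.mem_setOf_eq]
      omega
    exact measurable_eval_cylSA hp hu
  · refine MeasurableSpace.generateFrom_le fun A hA => ?_
    obtain ⟨j, hj⟩ := hA
    exact cylSA_le_pi (tSet d j) _ hj

/-- Two finite measures agreeing on all the `ℱ_{≥-j}` agree. -/
lemma ext_of_eq_on_tSets {μ ν : Measure (Env d E)} [IsFiniteMeasure μ] [IsFiniteMeasure ν]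
    (h : ∀ j : ℕ, ∀ A : Set (Env d E), MeasurableSet[cylSA (tSet d j)] A → μ A = ν A) :
    μ = ν := by
  refine ext_of_generate_finite _ generateFrom_tSets ?_ ?_ ?_
  · rintro A ⟨j, hj⟩ B ⟨k, hk⟩ -
    exact ⟨max j k, ((cylSA_mono (tSet_mono (le_max_left j k)) _ hj).inter
      (cylSA_mono (tSet_mono (le_max_right j k)) _ hk))⟩
  · rintro A ⟨j, hj⟩
    exact h j A hj
  · exact h 0 Set.univ MeasurableSet.univ

/-- From an a.e. forward-invariant set, produce a strictly shift-invariant set of the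
same measure. -/
lemma exists_invariant_set (P : Measure (Env d E)) [IsProbabilityMeasure P]
    (htrans : IsTranslationInvariant P) {W : Set (Env d E)} (hW : MeasurableSet W)
    (h1 : P (W \ shift (0 : Fin d → ℤ) 1 ⁻¹' W) = 0) :
    ∃ V : Set (Env d E), MeasurableSet V ∧ shift (0 : Fin d → ℤ) 1 ⁻¹' V = V ∧ P V = P W := by
  set θ : Env d E → Env d E := shift (0 : Fin d → ℤ) 1 with hθ
  have hθm : Measurable θ := measurable_shift _ _
  have hθk : ∀ k, Measurable (θ^[k]) := fun k => hθm.iterate k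
  have hPθ : ∀ A : Set (Env d E), MeasurableSet A → P (θ ⁻¹' A) = P A := by
    intro A hA
    conv_rhs => rw [← htrans (0 : Fin d → ℤ) 1]
    rw [Measure.map_apply hθm hA]
  have hPθk : ∀ k, ∀ A : Set (Env d E), MeasurableSet A → P (θ^[k] ⁻¹' A) = P A := by
    intro k
    induction k with
    | zero => intro A _; rfl
    | succ k ih =>
      intro A hA
      have : θ^[k + 1] ⁻¹' A = θ^[k] ⁻¹' (θ ⁻¹' A) := by
        rw [Function.iterate_succ']
        exact Set.preimage_comp
      rw [this, ih _ (hθm hA), hPθ A hA]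
  set D : ℕ → Set (Env d E) := fun k => θ^[k] ⁻¹' W with hD
  have hDm : ∀ k, MeasurableSet (D k) := fun k => (hθk k) hW
  have hDsucc : ∀ k, D (k + 1) = θ^[k] ⁻¹' (θ ⁻¹' W) := by
    intro k
    show θ^[k + 1] ⁻¹' W = _
    rw [Function.iterate_succ']
    exact Set.preimage_comp
  have h2 : P (θ ⁻¹' W \ W) = 0 := by
    have hWW : P (θ ⁻¹' W) = P W := hPθ W hW
    have hint : P (W ∩ θ ⁻¹' W) = P W := by
      have h := measure_diff_add_inter W (hθm hW) (μ := P)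
      rw [h1, zero_add] at h
      exact h
    have h' := measure_diff_add_inter (θ ⁻¹' W) hW (μ := P)
    rw [Set.inter_comm, hint, hWW] at h'
    have hfin : P W ≠ ⊤ := (measure_lt_top P W).ne
    have h'' : P W + P (θ ⁻¹' W \ W) = P W + 0 := by
      rw [add_zero, add_comm]; exact h'
    exact (ENNReal.add_right_inj hfin).mp h''
  have hDk0 : ∀ k, P (D k \ D (k + 1)) = 0 ∧ P (D (k + 1) \ D k) = 0 := by
    intro k
    have e1 : D k \ D (k + 1) = θ^[k] ⁻¹' (W \ θ ⁻¹' W) := by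
      rw [hDsucc k]; rfl
    have e2 : D (k + 1) \ D k = θ^[k] ⁻¹' (θ ⁻¹' W \ W) := by
      rw [hDsucc k]; rfl
    constructor
    · rw [e1, hPθk k _ (hW.diff (hθm hW))]; exact h1
    · rw [e2, hPθk k _ ((hθm hW).diff hW)]; exact h2
  have hWD : ∀ k, P (W \ D k) = 0 ∧ P (D k \ W) = 0 := by
    intro k
    induction k with
    | zero => simp [hD]
    | succ k ih =>
      constructor
      · refine measure_mono_null (fun x hx => ?_)
          (measure_union_null ih.1 (hDk0 k).1)
        by_cases hxk : x ∈ D k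
        · exact Set.mem_union_right _ ⟨hxk, hx.2⟩
        · exact Set.mem_union_left _ ⟨hx.1, hxk⟩
      · refine measure_mono_null (fun x hx => ?_)
          (measure_union_null ih.2 (hDk0 k).2)
        by_cases hxk : x ∈ D k
        · exact Set.mem_union_left _ ⟨hxk, hx.2⟩
        · exact Set.mem_union_right _ ⟨hx.1, hxk⟩
  set U : ℕ → Set (Env d E) := fun n => ⋃ k, D (n + k) with hU
  have hUm : ∀ n, MeasurableSet (U n) := fun n => MeasurableSet.iUnion fun k => hDm (n + k)
  have hDU : ∀ n, D n ⊆ U n := fun n => Set.subset_iUnion (fun k => D (n + k)) 0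
  have hUW : ∀ n, P (U n \ W) = 0 ∧ P (W \ U n) = 0 := by
    intro n
    constructor
    · have : U n \ W = ⋃ k, (D (n + k) \ W) := by
        rw [Set.iUnion_diff]
      rw [this]
      exact measure_iUnion_null fun k => (hWD (n + k)).2
    · exact measure_mono_null (Set.diff_subset_diff_right (hDU n)) (hWD n).1
  have hUmono : ∀ n, U (n + 1) ⊆ U n := by
    intro n x hx
    obtain ⟨k, hk⟩ := Set.mem_iUnion.mp hx
    exact Set.mem_iUnion.mpr ⟨k + 1, by rwa [show n + (k + 1) = n + 1 + k by omega]⟩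
  refine ⟨⋂ n, U n, MeasurableSet.iInter hUm, ?_, ?_⟩
  · have hθU : ∀ n, θ ⁻¹' U n = U (n + 1) := by
      intro n
      have hθD : ∀ m, θ ⁻¹' D m = D (m + 1) := by
        intro m
        simp only [hD, ← Set.preimage_comp, ← Function.iterate_succ]
      rw [hU]
      simp only [Set.preimage_iUnion, hθD]
      exact Set.iUnion_congr fun k => by rw [show n + k + 1 = n + 1 + k by omega]
    rw [Set.preimage_iInter]
    simp only [hθU]
    refine le_antisymm (fun x hx => ?_) (fun x hx => ?_)
    · exact Set.mem_iInter.mpr fun n => hUmono n (Set.mem_iInter.mp hx n)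
    · exact Set.mem_iInter.mpr fun n => Set.mem_iInter.mp hx (n + 1)
  · refine measure_congr (MeasureTheory.ae_eq_set.mpr ⟨?_, ?_⟩)
    · exact measure_mono_null
        (Set.diff_subset_diff_left (Set.iInter_subset U 0)) (hUW 0).1
    · have : W \ ⋂ n, U n = ⋃ n, (W \ U n) := by
        rw [Set.diff_iInter]
      rw [this]
      exact measure_iUnion_null fun n => (hUW n).2

end Aux4

section Aux5

lemma meas_inter_nzero {α : Type*} {m : MeasurableSpace α} (μ : Measure α) (t : Set α)
    {F : α → ENNReal} (h3 : ∀ᵐ x ∂μ, x ∈ t → F x = 0) :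
    μ ({x | F x ≠ 0} ∩ t) = 0 := by
  have h5 : ∀ᵐ x ∂μ, x ∉ {x | F x ≠ 0} ∩ t :=
    h3.mono fun x hx hmem => hmem.1 (hx hmem.2)
  have h6 := ae_iff.mp h5
  have h7 : {x | ¬ x ∉ ({x : α | F x ≠ 0} ∩ t)} = {x | F x ≠ 0} ∩ t := by ext x; simp
  rwa [h7] at h6

end Aux5


set_option maxHeartbeats 2000000 in
/-- Lemma 4.2, Lebesgue decomposition lemma. If `ℙ` is translation
invariant and ergodic in the time direction, the walk is elliptic, `ℚ` is invariant for
the environment process and the restrictions of `ℚ` and `ℙ` to `(Ω, ℱ_{≥0})` are not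
mutually singular, then there is a probability measure `ℚ_c`, invariant for the
environment process, which is mutually absolutely continuous with `ℙ` on `(Ω, ℱ_{≥0})`. -/
theorem lebesgue_decomposition_invariant
    {d : ℕ} {E : Type*} [Finite E] [MeasurableSpace E] [MeasurableSingletonClass E]
    (𝓡 : Finset (Fin d → ℤ)) (R : ℕ) (α : Env d E → (Fin d → ℤ) → ℝ)
    (hα : IsTransition 𝓡 R α)
    (P : Measure (Env d E)) [IsProbabilityMeasure P]
    (htrans : IsTranslationInvariant P)
    (herg : IsTimeErgodic P)
    (hell : ∀ η : Env d E, ∀ y ∈ 𝓡, 0 < α η y)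
    (Q : Measure (Env d E)) [IsProbabilityMeasure Q]
    (hQinv : IsInvariantEP 𝓡 α Q)
    (hns : ¬ ∃ S : Set (Env d E), MeasurableSet[cylSA (halfSpace d)] S ∧
      P S = 0 ∧ Q Sᶜ = 0) :
    ∃ Qc : Measure (Env d E), IsProbabilityMeasure Qc ∧ IsInvariantEP 𝓡 α Qc ∧
      ∀ B : Set (Env d E), MeasurableSet[cylSA (halfSpace d)] B →
        (P B = 0 ↔ Qc B = 0) := by
  classical
  cases isEmpty_or_nonempty E with
  | inl hE =>
    exfalso
    haveI : IsEmpty (Env d E) := ⟨fun f => hE.false (f ((0 : Fin d → ℤ), (0 : ℤ)))⟩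
    have h0 : (Set.univ : Set (Env d E)) = ∅ := Set.univ_eq_empty_iff.mpr inferInstance
    have h1 : (1 : ENNReal) = 0 := by
      rw [← measure_univ (μ := P), h0, measure_empty]
    exact one_ne_zero h1
  | inr hne =>
  have hm : cylSA (E := E) (halfSpace d) ≤ (MeasurableSpace.pi :
      MeasurableSpace (Env d E)) := cylSA_le_pi _
  set P' := P.trim hm with hP'
  set Q' := Q.trim hm with hQ'
  -- Lebesgue decomposition of Q w.r.t. P on ℱ_{≥0}
  obtain ⟨s, hs, hsps, hPsc⟩ := Measure.mutuallySingular_singularPart Q' P'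
  have hsamb : MeasurableSet s := hm _ hs
  have hPsc' : P sᶜ = 0 := by
    rw [← trim_measurableSet_eq hm hs.compl]; exact hPsc
  set Qa := Q.restrict s with hQa
  set Qs := Q.restrict sᶜ with hQs
  -- the absolutely continuous part kills ℱ_{≥0}-measurable P-null sets
  have hQa_null : ∀ A : Set (Env d E), MeasurableSet[cylSA (halfSpace d)] A →
      P A = 0 → Qa A = 0 := by
    intro A hA hPA
    have hAamb : MeasurableSet A := hm _ hA
    have hPA' : P' A = 0 := by rw [hP', trim_measurableSet_eq hm hA]; exact hPA
    have hAs : MeasurableSet[cylSA (E := E) (halfSpace d)] (A ∩ s) := hA.inter hs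
    have h1 : Qa A = Q' (A ∩ s) := by
      rw [hQa, Measure.restrict_apply hAamb, hQ', trim_measurableSet_eq hm hAs]
    rw [h1, Measure.haveLebesgueDecomposition_add Q' P', Measure.add_apply]
    have h2 : Q'.singularPart P' (A ∩ s) = 0 :=
      measure_mono_null Set.inter_subset_right hsps
    have h3 : P'.withDensity (Q'.rnDeriv P') (A ∩ s) = 0 := by
      refine le_antisymm (le_trans (measure_mono Set.inter_subset_left) ?_) zero_le
      rw [withDensity_apply _ hA]
      rw [setLIntegral_measure_zero _ _ hPA']
    rw [h2, h3, add_zero]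
  -- positivity of the absolutely continuous mass
  set c := Qa Set.univ with hc_def
  have hc_ne : c ≠ 0 := by
    intro h0
    refine hns ⟨sᶜ, hs.compl, hPsc', ?_⟩
    rw [compl_compl]
    rw [hc_def, hQa, Measure.restrict_apply_univ] at h0
    exact h0
  have hc_le : c ≤ 1 := by
    rw [hc_def, hQa, Measure.restrict_apply_univ]
    exact prob_le_one
  have hc_top : c ≠ ⊤ := (lt_of_le_of_lt hc_le ENNReal.one_lt_top).ne
  -- invariance of the a.c. part on ℱ_{≥0}
  have hQaQs : Qa + Qs = Q := Measure.restrict_add_restrict_compl hsamb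
  have hstep : stepEP 𝓡 α Qa + stepEP 𝓡 α Qs = Q := by
    rw [← stepEP_add, hQaQs]; exact hQinv
  have hAnull : ∀ A : Set (Env d E), MeasurableSet[cylSA (halfSpace d)] A →
      P A = 0 → stepEP 𝓡 α Qa A = 0 := stepEP_null hα P htrans hQa_null
  have hAsc : stepEP 𝓡 α Qa sᶜ = 0 := hAnull sᶜ hs.compl hPsc'
  have hAmass : stepEP 𝓡 α Qa Set.univ = c := by rw [stepEP_univ hα]
  have hAs_mass : stepEP 𝓡 α Qa s = c := by
    have := measure_add_measure_compl (μ := stepEP 𝓡 α Qa) hsamb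
    rw [hAsc, add_zero, hAmass] at this
    exact this
  have hQs_s : stepEP 𝓡 α Qs s = 0 := by
    have h1 : stepEP 𝓡 α Qa s + stepEP 𝓡 α Qs s = Q s := by
      rw [← Measure.add_apply, hstep]
    have h2 : Q s = c := by
      rw [hc_def, hQa, Measure.restrict_apply_univ]
    rw [h2, hAs_mass] at h1
    have h3 : c + stepEP 𝓡 α Qs s = c + 0 := by rw [add_zero]; exact h1
    exact (ENNReal.add_right_inj hc_top).mp h3
  have hQacm : ∀ A : Set (Env d E), MeasurableSet[cylSA (halfSpace d)] A →
      stepEP 𝓡 α Qa A = Qa A := by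
    intro A hA
    have hAamb : MeasurableSet A := hm _ hA
    have h1 : Qa A = stepEP 𝓡 α Qa (A ∩ s) + stepEP 𝓡 α Qs (A ∩ s) := by
      have h0 : stepEP 𝓡 α Qa (A ∩ s) + stepEP 𝓡 α Qs (A ∩ s) = Q (A ∩ s) := by
        rw [← Measure.add_apply, hstep]
      rw [hQa, Measure.restrict_apply hAamb, ← h0]
    have h2 : stepEP 𝓡 α Qs (A ∩ s) = 0 :=
      measure_mono_null Set.inter_subset_right hQs_s
    have h3 : stepEP 𝓡 α Qa (A ∩ s) = stepEP 𝓡 α Qa A := by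
      have h4 := measure_inter_add_diff (μ := stepEP 𝓡 α Qa) A hsamb
      have h5 : stepEP 𝓡 α Qa (A \ s) = 0 :=
        measure_mono_null (fun x hx => hx.2) hAsc
      rw [← h4, h5, add_zero]
    rw [h1, h2, add_zero, h3]
  -- the iterates of the a.c. part
  set Qn : ℕ → Measure (Env d E) := fun n => (fun μ => stepEP 𝓡 α μ)^[n] Qa with hQn
  have hQn_zero : Qn 0 = Qa := rfl
  have hQn_succ : ∀ n, Qn (n + 1) = stepEP 𝓡 α (Qn n) := fun n =>
    Function.iterate_succ_apply' _ n Qa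
  have hQn_le : ∀ n, Qn n ≤ Q := by
    intro n
    induction n with
    | zero => exact Measure.restrict_le_self
    | succ n ih =>
      rw [hQn_succ n]
      calc stepEP 𝓡 α (Qn n) ≤ stepEP 𝓡 α Q := stepEP_mono hα ih
        _ = Q := hQinv
  haveI hQnfin : ∀ n, IsFiniteMeasure (Qn n) := fun n =>
    ⟨lt_of_le_of_lt (le_trans (hQn_le n Set.univ) prob_le_one) ENNReal.one_lt_top⟩
  have hQn_mass : ∀ n, Qn n Set.univ = c := by
    intro n
    induction n with
    | zero => rfl
    | succ n ih => rw [hQn_succ n, stepEP_univ hα, ih]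
  -- eventual stabilization on the filtration
  have hT0 : cylSA (E := E) (tSet d 0) = cylSA (halfSpace d) := by
    rw [halfSpace_eq_tSet]
  have hstab1 : ∀ j, ∀ A : Set (Env d E), MeasurableSet[cylSA (tSet d j)] A →
      Qn (j + 1) A = Qn j A := by
    intro j
    induction j with
    | zero =>
      intro A hA
      rw [hT0] at hA
      rw [hQn_succ 0, hQn_zero]
      exact hQacm A hA
    | succ j ih =>
      intro A hA
      rw [hQn_succ (j + 1), hQn_succ j]
      exact stepEP_eq_on hα (fun B hB => by
        rw [← hQn_succ j]; exact ih B hB) A hA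
  have hstab : ∀ j n, j ≤ n → ∀ A : Set (Env d E), MeasurableSet[cylSA (tSet d j)] A →
      Qn n A = Qn j A := by
    intro j n hjn
    induction n with
    | zero =>
      intro A hA
      have : j = 0 := Nat.le_zero.mp hjn
      subst this; rfl
    | succ n ih =>
      intro A hA
      by_cases hj : j = n + 1
      · subst hj; rfl
      · have hjn' : j ≤ n := by omega
        have hA' : MeasurableSet[cylSA (E := E) (tSet d n)] A :=
          cylSA_mono (tSet_mono hjn') _ hA
        rw [hstab1 n A hA', ih hjn' A hA]
  -- the martingale of conditional densities
  set 𝔽 : Filtration ℕ (MeasurableSpace.pi : MeasurableSpace (Env d E)) :=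
    ⟨fun j => cylSA (tSet d j), fun j k hjk => cylSA_mono (tSet_mono hjk),
      fun j => cylSA_le_pi _⟩ with h𝔽
  set f : ℕ → Env d E → ℝ := fun n x => ((Qn n).rnDeriv Q x).toReal with hf
  have hQnQ : ∀ n, Qn n ≪ Q := fun n => Measure.absolutelyContinuous_of_le (hQn_le n)
  have hfint : ∀ n, Integrable (f n) Q := fun n => Measure.integrable_toReal_rnDeriv
  have hsetint : ∀ n, ∀ A : Set (Env d E), ∫ x in A, f n x ∂Q = (Qn n A).toReal :=
    fun n A => Measure.setIntegral_toReal_rnDeriv (hQnQ n) A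
  set M : ℕ → Env d E → ℝ := fun n => Q[f n | 𝔽 n] with hM
  have hMadapted : StronglyAdapted 𝔽 M := fun n => stronglyMeasurable_condExp
  have hMj : ∀ i j, i ≤ j → Q[f j | 𝔽 i] =ᵐ[Q] M i := by
    intro i j hij
    refine (ae_eq_condExp_of_forall_setIntegral_eq (𝔽.le i) (hfint j)
      (fun A _ _ => integrable_condExp.integrableOn) (fun A hA _ => ?_)
      stronglyMeasurable_condExp.aestronglyMeasurable).symm
    rw [setIntegral_condExp (𝔽.le i) (hfint i) hA, hsetint i A, hsetint j A,
      hstab i j hij A hA]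
  have hMmart : Martingale M 𝔽 Q := by
    refine ⟨hMadapted, fun i j hij => ?_⟩
    exact (condExp_condExp_of_le (𝔽.mono hij) (𝔽.le j)).trans (hMj i j hij)
  have hM_nonneg : ∀ n, (fun _ => (0 : ℝ)) ≤ᵐ[Q] M n := fun n =>
    condExp_nonneg (ae_of_all _ fun x => ENNReal.toReal_nonneg)
  have hM_le_one : ∀ n, M n ≤ᵐ[Q] fun _ => (1 : ℝ) := by
    intro n
    have hf_le_one : f n ≤ᵐ[Q] fun _ => (1 : ℝ) := by
      filter_upwards [Measure.rnDeriv_le_one_of_le (hQn_le n)] with x hx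
      have hx' : (Qn n).rnDeriv Q x ≤ 1 := hx
      calc f n x ≤ (1 : ENNReal).toReal := ENNReal.toReal_mono ENNReal.one_ne_top hx'
        _ = 1 := ENNReal.toReal_one
    have h1 := condExp_mono (μ := Q) (m := 𝔽 n) (hfint n)
      (integrable_const (1 : ℝ)) hf_le_one
    rw [condExp_const (𝔽.le n) (1 : ℝ)] at h1
    exact h1
  have hbdd : ∀ n, eLpNorm (M n) 1 Q ≤ ((1 : NNReal) : ENNReal) := by
    intro n
    have h1 : ∀ᵐ x ∂Q, ‖M n x‖ ≤ (1 : ℝ) := by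
      filter_upwards [hM_nonneg n, hM_le_one n] with x h0 h1
      rw [Real.norm_eq_abs, abs_of_nonneg h0]
      exact h1
    have h2 := eLpNorm_le_of_ae_bound (μ := Q) (p := 1) h1
    simpa using h2
  set g : Env d E → ℝ := 𝔽.limitProcess M Q with hg
  have hconv : ∀ᵐ x ∂Q, Tendsto (fun n => M n x) atTop (𝓝 (g x)) :=
    hMmart.submartingale.ae_tendsto_limitProcess hbdd
  have hgmeas : StronglyMeasurable g :=
    Filtration.stronglyMeasurable_limit_process'
  have hg01 : ∀ᵐ x ∂Q, 0 ≤ g x ∧ g x ≤ 1 := by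
    have hall0 : ∀ᵐ x ∂Q, ∀ n, (0 : ℝ) ≤ M n x := ae_all_iff.mpr hM_nonneg
    have hall1 : ∀ᵐ x ∂Q, ∀ n, M n x ≤ 1 := ae_all_iff.mpr hM_le_one
    filter_upwards [hconv, hall0, hall1] with x hx h0 h1
    exact ⟨ge_of_tendsto' hx h0, le_of_tendsto' hx h1⟩
  set Qc0 : Measure (Env d E) := Q.withDensity (fun x => ENNReal.ofReal (g x)) with hQc0d
  have hgint : Integrable g Q := by
    refine ⟨hgmeas.aestronglyMeasurable, ?_⟩
    refine HasFiniteIntegral.of_bounded (C := 1) ?_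
    filter_upwards [hg01] with x hx
    rw [Real.norm_eq_abs, abs_of_nonneg hx.1]
    exact hx.2
  have hQc0_eq : ∀ j, ∀ A : Set (Env d E), MeasurableSet[cylSA (tSet d j)] A →
      Qc0 A = Qn j A := by
    intro j A hA
    have hAamb : MeasurableSet A := cylSA_le_pi _ _ hA
    have h1 : Qc0 A = ∫⁻ x in A, ENNReal.ofReal (g x) ∂Q := withDensity_apply _ hAamb
    have h2 : ∫⁻ x in A, ENNReal.ofReal (g x) ∂Q = ENNReal.ofReal (∫ x in A, g x ∂Q) :=
      (ofReal_integral_eq_lintegral_ofReal hgint.integrableOn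
        (ae_restrict_of_ae (hg01.mono fun x hx => hx.1))).symm
    have h3 : Tendsto (fun n => ∫ x in A, M n x ∂Q) atTop (𝓝 (∫ x in A, g x ∂Q)) := by
      refine tendsto_integral_of_dominated_convergence (fun _ => (1 : ℝ)) ?_ ?_ ?_ ?_
      · exact fun n =>
          ((stronglyMeasurable_condExp.mono (𝔽.le n)).aestronglyMeasurable).restrict
      · exact integrable_const 1
      · intro n
        refine ae_restrict_of_ae ?_
        filter_upwards [hM_nonneg n, hM_le_one n] with x h0 h1
        rw [Real.norm_eq_abs, abs_of_nonneg h0]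
        exact h1
      · exact ae_restrict_of_ae hconv
    have h4 : ∀ n, j ≤ n → ∫ x in A, M n x ∂Q = (Qn j A).toReal := by
      intro n hn
      have hA' : MeasurableSet[𝔽 n] A := cylSA_mono (tSet_mono hn) _ hA
      rw [hM, setIntegral_condExp (𝔽.le n) (hfint n) hA', hsetint n A,
        hstab j n hn A hA]
    have h5 : Tendsto (fun n => ∫ x in A, M n x ∂Q) atTop (𝓝 ((Qn j A).toReal)) := by
      refine tendsto_const_nhds.congr' ?_
      filter_upwards [eventually_ge_atTop j] with n hn
      exact (h4 n hn).symm
    have h6 : ∫ x in A, g x ∂Q = (Qn j A).toReal := tendsto_nhds_unique h3 h5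
    rw [h1, h2, h6, ENNReal.ofReal_toReal (measure_ne_top _ _)]
  have hQc0_mass : Qc0 Set.univ = c := by
    rw [hQc0_eq 0 Set.univ MeasurableSet.univ, hQn_zero]
  haveI hQc0fin : IsFiniteMeasure Qc0 :=
    ⟨by rw [hQc0_mass]; exact lt_of_le_of_lt hc_le ENNReal.one_lt_top⟩
  haveI : IsFiniteMeasure (stepEP 𝓡 α Qc0) :=
    ⟨by rw [stepEP_univ hα, hQc0_mass]; exact lt_of_le_of_lt hc_le ENNReal.one_lt_top⟩
  clear_value Qc0
  have hQc0_inv : stepEP 𝓡 α Qc0 = Qc0 := by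
    refine ext_of_eq_on_tSets fun j A hA => ?_
    have hA' : MeasurableSet[cylSA (E := E) (tSet d (j + 1))] A :=
      cylSA_mono (tSet_mono (Nat.le_succ j)) _ hA
    calc stepEP 𝓡 α Qc0 A = stepEP 𝓡 α (Qn j) A :=
          stepEP_eq_on hα (fun B hB => hQc0_eq j B hB) A hA'
      _ = Qn (j + 1) A := by rw [hQn_succ j]
      _ = Qn j A := hstab1 j A hA
      _ = Qc0 A := (hQc0_eq j A hA).symm
  have hQc0_null : ∀ A : Set (Env d E), MeasurableSet[cylSA (halfSpace d)] A →
      P A = 0 → Qc0 A = 0 := by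
    intro A hA hPA
    have hA0 : MeasurableSet[cylSA (E := E) (tSet d 0)] A := by rw [hT0]; exact hA
    rw [hQc0_eq 0 A hA0, hQn_zero]
    exact hQa_null A hA hPA
  -- the density of Qc0 w.r.t. P on ℱ_{≥0} and its support W
  set Qc0' := Qc0.trim hm with hQc0't
  have hQc0'_ac : Qc0' ≪ P' := by
    refine Measure.AbsolutelyContinuous.mk fun A hA hPA => ?_
    rw [hQc0't, trim_measurableSet_eq hm hA]
    refine hQc0_null A hA ?_
    rw [hP', trim_measurableSet_eq hm hA] at hPA
    exact hPA
  set h : Env d E → ENNReal := Qc0'.rnDeriv P' with hh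
  have hwd : P'.withDensity h = Qc0' := Measure.withDensity_rnDeriv_eq _ _ hQc0'_ac
  have hhmeas : Measurable[cylSA (E := E) (halfSpace d)] h := Measure.measurable_rnDeriv _ _
  set W : Set (Env d E) := {x | h x ≠ 0} with hWdef
  have hWm : MeasurableSet[cylSA (E := E) (halfSpace d)] W :=
    hhmeas (measurableSet_singleton 0).compl
  have hWamb : MeasurableSet W := hm _ hWm
  have hQc0_evalm : ∀ A : Set (Env d E), MeasurableSet[cylSA (halfSpace d)] A →
      Qc0 A = ∫⁻ x in A, h x ∂P' := by
    intro A hA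
    have h1 : Qc0 A = Qc0' A := (trim_measurableSet_eq hm hA).symm
    rw [h1, ← hwd]
    exact withDensity_apply _ hA
  have hQc0_Wc : Qc0 Wᶜ = 0 := by
    rw [hQc0_evalm Wᶜ hWm.compl]
    have hz : ∀ᵐ x ∂P', x ∈ Wᶜ → h x = 0 := ae_of_all _ fun x hx => not_not.mp hx
    rw [setLIntegral_congr_fun_ae hWm.compl hz]
    simp
  have hshiftnull : ∀ A : Set (Env d E), MeasurableSet A → Qc0 A = 0 →
      Qc0 (shift (0 : Fin d → ℤ) 1 ⁻¹' A) = 0 := by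
    intro A hA h0
    have h1 : stepEP 𝓡 α Qc0 A = 0 := by rw [hQc0_inv]; exact h0
    rw [stepEP_apply hα Qc0 hA] at h1
    have h2 : ∫⁻ η in shift (0 : Fin d → ℤ) 1 ⁻¹' A, ENNReal.ofReal (α η 0) ∂Qc0 = 0 :=
      (Finset.sum_eq_zero_iff.mp h1) 0 hα.zero_mem
    have hpre : MeasurableSet (shift (0 : Fin d → ℤ) 1 ⁻¹' A) := measurable_shift _ _ hA
    have h3 := (setLIntegral_eq_zero_iff hpre
      ((measurable_alpha' hα 0).ennreal_ofReal)).mp h2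
    have h6 := meas_inter_nzero Qc0 _ h3
    have h7 : {x : Env d E | ENNReal.ofReal (α x 0) ≠ 0} = Set.univ :=
      Set.eq_univ_of_forall fun x =>
        (ENNReal.ofReal_pos.mpr (hell x 0 hα.zero_mem)).ne'
    rw [h7, Set.univ_inter] at h6
    exact h6
  have hWdiff : P (W \ shift (0 : Fin d → ℤ) 1 ⁻¹' W) = 0 := by
    have h0 : Qc0 (shift (0 : Fin d → ℤ) 1 ⁻¹' Wᶜ) = 0 :=
      hshiftnull Wᶜ hWamb.compl hQc0_Wc
    have hprem : MeasurableSet[cylSA (E := E) (halfSpace d)]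
        (shift (0 : Fin d → ℤ) 1 ⁻¹' Wᶜ) :=
      measurable_shift_cylSA 0 1 (shift_mem_halfSpace 0) hWm.compl
    rw [hQc0_evalm _ hprem] at h0
    have h3 := (setLIntegral_eq_zero_iff (μ := P') hprem hhmeas).mp h0
    have h4 : P' (W ∩ shift (0 : Fin d → ℤ) 1 ⁻¹' Wᶜ) = 0 := by
      have h4' := meas_inter_nzero P' _ h3
      rwa [← hWdef] at h4'
    have h5 : MeasurableSet[cylSA (E := E) (halfSpace d)]
        (W ∩ shift (0 : Fin d → ℤ) 1 ⁻¹' Wᶜ) := hWm.inter hprem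
    have h6 : P (W ∩ shift (0 : Fin d → ℤ) 1 ⁻¹' Wᶜ) = 0 := by
      rw [← trim_measurableSet_eq hm h5]
      exact h4
    have h7 : W \ shift (0 : Fin d → ℤ) 1 ⁻¹' W =
        W ∩ shift (0 : Fin d → ℤ) 1 ⁻¹' Wᶜ := by
      rw [Set.preimage_compl]
      rfl
    rw [h7]
    exact h6
  have hPWc : P Wᶜ = 0 := by
    obtain ⟨V, hVm, hVinv, hPV⟩ := exists_invariant_set P htrans hWamb hWdiff
    have hPWpos : P W ≠ 0 := by
      intro h0
      have h1 : Qc0 W = 0 := hQc0_null W hWm h0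
      have h3 := measure_add_measure_compl (μ := Qc0) hWamb
      rw [h1, hQc0_Wc, add_zero] at h3
      rw [← h3] at hQc0_mass
      exact hc_ne hQc0_mass.symm
    rcases herg V hVm hVinv with h | h
    · exact absurd (hPV ▸ h) hPWpos
    · have h1 : P W = 1 := by rw [← hPV]; exact h
      rw [measure_compl hWamb (measure_ne_top _ _), h1, measure_univ, tsub_self]
  -- assemble the normalized measure
  refine ⟨c⁻¹ • Qc0, ?_, ?_, ?_⟩
  · constructor
    rw [Measure.smul_apply, smul_eq_mul, hQc0_mass, ENNReal.inv_mul_cancel hc_ne hc_top]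
  · rw [IsInvariantEP, stepEP_smul, hQc0_inv]
  · intro B hB
    have hsmul : (c⁻¹ • Qc0) B = c⁻¹ * Qc0 B := by rw [Measure.smul_apply, smul_eq_mul]
    constructor
    · intro hPB
      rw [hsmul, hQc0_null B hB hPB, mul_zero]
    · intro h0
      rw [hsmul] at h0
      have hQc0B : Qc0 B = 0 := by
        rcases mul_eq_zero.mp h0 with h | h
        · exact absurd h (ENNReal.inv_ne_zero.mpr hc_top)
        · exact h
      rw [hQc0_evalm B hB] at hQc0B
      have h3 := (setLIntegral_eq_zero_iff (μ := P') hB hhmeas).mp hQc0B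
      have h4 : P' (W ∩ B) = 0 := by
        have h4' := meas_inter_nzero P' _ h3
        rwa [← hWdef] at h4'
      have h5 : P (W ∩ B) = 0 := by
        rw [← trim_measurableSet_eq hm (hWm.inter hB)]
        exact h4
      have h6 : P B ≤ P (W ∩ B) + P Wᶜ := by
        refine le_trans (measure_mono fun x hx => ?_) (measure_union_le _ _)
        by_cases hxW : x ∈ W
        · exact Or.inl ⟨hxW, hx⟩
        · exact Or.inr hxW
      rw [h5, hPWc, add_zero] at h6
      exact le_antisymm h6 zero_le

end RWDRE
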